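/- Let n ≥ 1 and consider the two lexical matchings M^n_{2n+1,n+1} and M^{n+1}_{2n+1,n+1} between levels n+1 and n+2 of Q_{2n+1}. A vertex x in level n+1 of Q_{2n+1} whose last bit is 0 is matched by M^n_{2n+1,n+1} and unmatched by M^{n+1}_{2n+1,n+1} if and only if x = y∘0 for some y ∈ D^{=0}_{2n,n+1}; a vertex x in level n+1 whose last bit is 1 is matched by M^n_{2n+1,n+1} and unmatched by M^{n+1}_{2n+1,n+1} if and only if x = y∘1 for some y ∈ D^{=0}_{2n,n} (here ∘ denotes concatenation of one bit at the end). -/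

import Mathlib

/-- The Hamming weight of a bitstring of length `n`, i.e., its number of 1-bits. -/
def wt {n : ℕ} (x : Fin n → Bool) : ℕ := (Finset.univ.filter fun i => x i = true).card

/-- The `n`-dimensional hypercube: vertices are bitstrings of length `n`, two of which are
adjacent iff they differ in exactly one position. -/
def cube (n : ℕ) : SimpleGraph (Fin n → Bool) where
  Adj x y := hammingDist x y = 1
  symm := ⟨fun x y h => (hammingDist_comm y x).trans h⟩
  loopless := ⟨fun x h => by simp [hammingDist_self] at h⟩
/-- The number of 1-bits among the first `j` bits of `x` (interpreting a bitstring as a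
lattice path, this determines the height after `j` steps). -/
def onesUpTo {n : ℕ} (x : Fin n → Bool) (j : ℕ) : ℕ :=
  (Finset.univ.filter fun i : Fin n => i.val < j ∧ x i = true).card

/-- The height of the lattice path of `x` after `j` steps: number of 1s minus number of 0s
among the first `j` bits (appended steps beyond the length of `x` being down-steps). -/
def hgt {n : ℕ} (x : Fin n → Bool) (j : ℕ) : ℤ := 2 * (onesUpTo x j : ℤ) - (j : ℤ)

/-- The length of the extended lattice path `x^↑`: if the final height `2·wt x − n` is `≥ −1`,
down-steps are appended until the path ends at height `−1` (total length `2·wt x + 1`);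
otherwise nothing is appended. -/
def extLen {n : ℕ} (x : Fin n → Bool) : ℕ := max n (2 * wt x + 1)

/-- Position `j` (0-indexed) of the extended path `x^↑` is a down-step: either it is a 0-bit
of `x`, or one of the appended down-steps. -/
def isDownStep {n : ℕ} (x : Fin n → Bool) (j : ℕ) : Prop :=
  j < extLen x ∧ ∀ h : j < n, x ⟨j, h⟩ = false

/-- The `i`-lexical matching `M^i_{n,k}` between levels `k` and `k+1` of the `n`-cube, as a
relation: `lexUp n k i x y` holds iff `x` lies in level `k` and `y = M^{i,↑}_{n,k}(x)`, i.e.,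
`y` is obtained from `x` by flipping to 1 the 0-bit at the `i`-th down-step of `x^↑` in the
order of decreasing starting height, ties broken from right to left, counting from 0,
provided this down-step lies within `x`. -/
def lexUp (n k i : ℕ) (x y : Fin n → Bool) : Prop :=
  wt x = k ∧ ∃ d : ℕ, d < n ∧ isDownStep x d ∧
    ({j : ℕ | isDownStep x j ∧ (hgt x d < hgt x j ∨ (hgt x j = hgt x d ∧ d < j))}).ncard = i ∧
    y = fun t : Fin n => if t.val = d then true else x t
/-- `x ∈ D_{m,k}`: a bitstring of length `m` with exactly `k` 1-bits such that every prefix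
contains at least as many 1s as 0s. -/
def inD (m k : ℕ) (x : Fin m → Bool) : Prop :=
  wt x = k ∧ ∀ j ≤ m, j ≤ 2 * onesUpTo x j

/-- `x ∈ D^{>0}_{m,k}`: moreover every nonempty prefix contains strictly more 1s than 0s. -/
def inDgt0 (m k : ℕ) (x : Fin m → Bool) : Prop :=
  wt x = k ∧ ∀ j, 1 ≤ j → j ≤ m → j < 2 * onesUpTo x j

/-- `x ∈ D^{=0}_{m,k}`: in `D_{m,k}` with at least one nonempty prefix containing equally
many 1s and 0s. -/
def inDeq0 (m k : ℕ) (x : Fin m → Bool) : Prop :=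
  inD m k x ∧ ∃ j, 1 ≤ j ∧ j ≤ m ∧ j = 2 * onesUpTo x j

/-- `x ∈ D^-_{m,k}`: a bitstring of length `m` with exactly `k` 1-bits such that exactly one
prefix contains strictly fewer 1s than 0s. -/
def inDminus (m k : ℕ) (x : Fin m → Bool) : Prop :=
  wt x = k ∧ ({j : ℕ | j ≤ m ∧ 2 * onesUpTo x j < j}).ncard = 1
section helpers

open Classical

variable {m : ℕ}

lemma onesUpTo_zero (x : Fin m → Bool) : onesUpTo x 0 = 0 := by
  unfold onesUpTo
  simp

lemma onesUpTo_of_ge (x : Fin m → Bool) {j : ℕ} (hj : m ≤ j) : onesUpTo x j = wt x := by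
  unfold onesUpTo wt
  apply congrArg Finset.card
  ext i
  simp only [Finset.mem_filter, Finset.mem_univ, true_and, and_iff_right_iff_imp]
  intro _
  exact lt_of_lt_of_le i.isLt hj

lemma onesUpTo_succ (x : Fin m → Bool) (j : ℕ) (hj : j < m) :
    onesUpTo x (j + 1) = onesUpTo x j + (if x ⟨j, hj⟩ = true then 1 else 0) := by
  unfold onesUpTo
  by_cases h : x ⟨j, hj⟩ = true
  · rw [if_pos h]
    have he : (Finset.univ.filter fun i : Fin m => i.val < j + 1 ∧ x i = true)
        = insert ⟨j, hj⟩ (Finset.univ.filter fun i : Fin m => i.val < j ∧ x i = true) := by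
      ext i
      simp only [Finset.mem_insert, Finset.mem_filter, Finset.mem_univ, true_and]
      constructor
      · rintro ⟨h1, h2⟩
        rcases Nat.lt_succ_iff_lt_or_eq.mp h1 with h1 | h1
        · exact Or.inr ⟨h1, h2⟩
        · exact Or.inl (Fin.ext h1)
      · rintro (rfl | ⟨h1, h2⟩)
        · exact ⟨Nat.lt_succ_self j, h⟩
        · exact ⟨Nat.lt_succ_of_lt h1, h2⟩
    rw [he, Finset.card_insert_of_notMem (by simp)]
  · simp only [if_neg h, add_zero]
    apply congrArg Finset.card
    ext i
    simp only [Finset.mem_filter, Finset.mem_univ, true_and, and_congr_left_iff]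
    intro hi
    constructor
    · intro h1
      rcases Nat.lt_succ_iff_lt_or_eq.mp h1 with h1 | h1
      · exact h1
      · exfalso; apply h; rwa [show (⟨j, hj⟩ : Fin m) = i from (Fin.ext h1.symm)]
    · exact Nat.lt_succ_of_lt

end helpers
section core

open Classical

noncomputable def DSf (n : ℕ) (x : Fin (2*n+1) → Bool) : Finset ℕ :=
  (Finset.range (2*n+3)).filter fun j => isDownStep x j

noncomputable def Sf (n : ℕ) (x : Fin (2*n+1) → Bool) (d : ℕ) : Finset ℕ :=
  (DSf n x).filter fun j => hgt x d < hgt x j ∨ (hgt x j = hgt x d ∧ d < j)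

variable {n : ℕ} {x : Fin (2*n+1) → Bool}

lemma extLen_eq (hx : wt x = n + 1) : extLen x = 2*n+3 := by
  unfold extLen; rw [hx]; omega

lemma isDownStep_iff (hx : wt x = n + 1) (j : ℕ) :
    isDownStep x j ↔ ((∃ h : j < 2*n+1, x ⟨j, h⟩ = false) ∨ j = 2*n+1 ∨ j = 2*n+2) := by
  unfold isDownStep
  rw [extLen_eq hx]
  constructor
  · rintro ⟨h1, h2⟩
    by_cases hj : j < 2*n+1
    · exact Or.inl ⟨hj, h2 hj⟩
    · right; omega
  · rintro (⟨h, hf⟩ | h | h)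
    · exact ⟨by omega, fun _ => hf⟩
    · exact ⟨by omega, fun hh => by omega⟩
    · exact ⟨by omega, fun hh => by omega⟩

lemma mem_DSf (hx : wt x = n + 1) (j : ℕ) : j ∈ DSf n x ↔ isDownStep x j := by
  unfold DSf
  simp only [Finset.mem_filter, Finset.mem_range, and_iff_right_iff_imp]
  intro h
  exact lt_of_lt_of_le h.1 (le_of_eq (extLen_eq hx))

lemma onesUpTo_top (hx : wt x = n+1) {j : ℕ} (hj : 2*n+1 ≤ j) : onesUpTo x j = n+1 := by
  rw [onesUpTo_of_ge x hj, hx]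

lemma hgt_top1 (hx : wt x = n+1) : hgt x (2*n+1) = 1 := by
  unfold hgt
  rw [onesUpTo_top hx (le_refl _)]
  push_cast
  ring

lemma hgt_top2 (hx : wt x = n+1) : hgt x (2*n+2) = 0 := by
  unfold hgt
  rw [onesUpTo_top hx (by omega)]
  push_cast
  ring

lemma mem_DSf_top1 (hx : wt x = n+1) : 2*n+1 ∈ DSf n x :=
  (mem_DSf hx _).mpr ((isDownStep_iff hx _).mpr (Or.inr (Or.inl rfl)))

lemma mem_DSf_top2 (hx : wt x = n+1) : 2*n+2 ∈ DSf n x :=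
  (mem_DSf hx _).mpr ((isDownStep_iff hx _).mpr (Or.inr (Or.inr rfl)))

lemma zeros_card (hx : wt x = n+1) :
    (Finset.univ.filter fun i : Fin (2*n+1) => x i = false).card = n := by
  have h := Finset.card_filter_add_card_filter_not
    (s := (Finset.univ : Finset (Fin (2*n+1)))) (fun i => x i = true)
  have h2 : (Finset.univ.filter fun i : Fin (2*n+1) => ¬ x i = true)
      = (Finset.univ.filter fun i : Fin (2*n+1) => x i = false) := by
    apply Finset.filter_congr
    intro i _
    simp [Bool.not_eq_true]
  rw [h2] at h
  unfold wt at hx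
  rw [hx] at h
  simp only [Finset.card_univ, Fintype.card_fin] at h
  omega

lemma DSf_eq (hx : wt x = n+1) :
    DSf n x = ((Finset.univ.filter fun i : Fin (2*n+1) => x i = false).image Fin.val)
      ∪ {2*n+1, 2*n+2} := by
  ext j
  rw [mem_DSf hx, isDownStep_iff hx]
  simp only [Finset.mem_union, Finset.mem_image, Finset.mem_filter, Finset.mem_univ, true_and,
    Finset.mem_insert, Finset.mem_singleton]
  constructor
  · rintro (⟨h, hf⟩ | h | h)
    · exact Or.inl ⟨⟨j, h⟩, hf, rfl⟩
    · exact Or.inr (Or.inl h)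
    · exact Or.inr (Or.inr h)
  · rintro (⟨i, hf, rfl⟩ | h | h)
    · exact Or.inl ⟨i.isLt, by simpa using hf⟩
    · exact Or.inr (Or.inl h)
    · exact Or.inr (Or.inr h)

lemma DSf_card (hx : wt x = n+1) : (DSf n x).card = n + 2 := by
  rw [DSf_eq hx, Finset.card_union_of_disjoint]
  · rw [Finset.card_image_of_injective _ Fin.val_injective, zeros_card hx]
    have h2 : ({2*n+1, 2*n+2} : Finset ℕ).card = 2 := by
      rw [Finset.card_insert_of_notMem (by simp), Finset.card_singleton]
    omega
  · simp only [Finset.disjoint_left, Finset.mem_image, Finset.mem_filter, Finset.mem_univ,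
      true_and, Finset.mem_insert, Finset.mem_singleton]
    rintro a ⟨i, _, rfl⟩ hmem
    have := i.isLt
    omega

lemma Sset_eq (hx : wt x = n+1) (d : ℕ) :
    ({j : ℕ | isDownStep x j ∧ (hgt x d < hgt x j ∨ (hgt x j = hgt x d ∧ d < j))}).ncard
      = (Sf n x d).card := by
  rw [← Set.ncard_coe_finset]
  congr 1
  ext j
  simp only [Set.mem_setOf_eq, Finset.coe_filter, Sf, Finset.mem_filter, mem_DSf hx,
    Finset.mem_coe]

lemma exists_lexUp_iff (hx : wt x = n+1) (i : ℕ) :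
    (∃ y, lexUp (2*n+1) (n+1) i x y) ↔
      ∃ d, d < 2*n+1 ∧ isDownStep x d ∧ (Sf n x d).card = i := by
  constructor
  · rintro ⟨y, -, d, h1, h2, h3, -⟩
    exact ⟨d, h1, h2, by rw [← Sset_eq hx]; exact h3⟩
  · rintro ⟨d, h1, h2, h3⟩
    exact ⟨fun t => if t.val = d then true else x t, hx, d, h1, h2,
      by rw [Sset_eq hx]; exact h3, rfl⟩

end core
section key

open Classical

variable {n : ℕ} {x : Fin (2*n+1) → Bool}

lemma Sf_subset_of_pos (hx : wt x = n+1) {d : ℕ} (hpos : 1 ≤ hgt x d) :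
    Sf n x d ⊆ ((DSf n x).erase (2*n+2)).erase d := by
  intro j hj
  simp only [Sf, Finset.mem_filter] at hj
  obtain ⟨hjD, hcond⟩ := hj
  have h2 : hgt x (2*n+2) = 0 := hgt_top2 hx
  rw [Finset.mem_erase, Finset.mem_erase]
  refine ⟨?_, ?_, hjD⟩
  · rintro rfl
    rcases hcond with h | ⟨_, h⟩
    · exact lt_irrefl _ h
    · exact lt_irrefl _ h
  · rintro rfl
    rw [h2] at hcond
    rcases hcond with h | ⟨h1, _⟩ <;> omega

lemma card_erase2 (hx : wt x = n+1) {d : ℕ} (hd : d < 2*n+1) (hdD : d ∈ DSf n x) :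
    (((DSf n x).erase (2*n+2)).erase d).card = n := by
  have hmem : d ∈ (DSf n x).erase (2*n+2) := Finset.mem_erase.mpr ⟨by omega, hdD⟩
  rw [Finset.card_erase_of_mem hmem, Finset.card_erase_of_mem (mem_DSf_top2 hx), DSf_card hx]
  omega

lemma downstep_zero (hx : wt x = n+1) {d : ℕ} (hd : d < 2*n+1) (hds : isDownStep x d) :
    ∃ h : d < 2*n+1, x ⟨d, h⟩ = false := by
  rcases (isDownStep_iff hx d).mp hds with h | h | h
  · exact h
  · omega
  · omega

lemma unmatched_top (hx : wt x = n+1)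
    (hA : ∀ j (h : j < 2*n+1), x ⟨j, h⟩ = false → 1 ≤ hgt x j) :
    ∀ d, d < 2*n+1 → isDownStep x d → (Sf n x d).card ≠ n+1 := by
  intro d hd hds
  have hdD : d ∈ DSf n x := (mem_DSf hx d).mpr hds
  obtain ⟨h, hf⟩ := downstep_zero hx hd hds
  have hpos : 1 ≤ hgt x d := hA d h hf
  have hle := Finset.card_le_card (Sf_subset_of_pos hx hpos)
  rw [card_erase2 hx hd hdD] at hle
  omega

lemma key_forward (hx : wt x = n+1)
    (hQ : ∀ d, d < 2*n+1 → isDownStep x d → (Sf n x d).card ≠ n+1) :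
    ∀ j (h : j < 2*n+1), x ⟨j, h⟩ = false → 1 ≤ hgt x j := by
  have hne : (DSf n x).Nonempty := ⟨2*n+2, mem_DSf_top2 hx⟩
  have hineN : ((DSf n x).image (hgt x)).Nonempty := hne.image _
  obtain ⟨hstar, hmin1, hstar_mem⟩ :
      ∃ hstar : ℤ, (∀ j ∈ DSf n x, hstar ≤ hgt x j) ∧ ∃ j ∈ DSf n x, hgt x j = hstar := by
    refine ⟨((DSf n x).image (hgt x)).min' hineN, ?_, ?_⟩
    · intro j hj
      exact Finset.min'_le _ _ (Finset.mem_image_of_mem _ hj)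
    · obtain ⟨j, hj1, hj2⟩ := Finset.mem_image.mp (Finset.min'_mem _ hineN)
      exact ⟨j, hj1, hj2⟩
  have hTne : ((DSf n x).filter fun j => hgt x j = hstar).Nonempty := by
    obtain ⟨j, hj1, hj2⟩ := hstar_mem
    exact ⟨j, Finset.mem_filter.mpr ⟨hj1, hj2⟩⟩
  obtain ⟨e, heD, heh, hmin2⟩ :
      ∃ e, e ∈ DSf n x ∧ hgt x e = hstar ∧ ∀ j ∈ DSf n x, hgt x j = hstar → e ≤ j := by
    refine ⟨((DSf n x).filter fun j => hgt x j = hstar).min' hTne, ?_, ?_, ?_⟩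
    · have := Finset.min'_mem _ hTne
      exact (Finset.mem_filter.mp this).1
    · have := Finset.min'_mem _ hTne
      exact (Finset.mem_filter.mp this).2
    · intro j hj hjh
      exact Finset.min'_le _ _ (Finset.mem_filter.mpr ⟨hj, hjh⟩)
  have hSe : Sf n x e = (DSf n x).erase e := by
    ext j
    simp only [Sf, Finset.mem_filter, Finset.mem_erase]
    constructor
    · rintro ⟨hjD, hc⟩
      refine ⟨?_, hjD⟩
      rintro rfl
      rcases hc with hc | ⟨_, hc⟩
      · exact lt_irrefl _ hc
      · exact lt_irrefl _ hc
    · rintro ⟨hne', hjD⟩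
      refine ⟨hjD, ?_⟩
      rcases lt_or_eq_of_le (hmin1 j hjD) with hlt | heq
      · exact Or.inl (by rw [heh]; exact hlt)
      · right
        refine ⟨by rw [heh, ← heq], ?_⟩
        have := hmin2 j hjD heq.symm
        omega
  have hcardSe : (Sf n x e).card = n+1 := by
    rw [hSe, Finset.card_erase_of_mem heD, DSf_card hx]
    omega
  have heD' : isDownStep x e := (mem_DSf hx e).mp heD
  have hetop : ¬ (e < 2*n+1) := fun hlt => hQ e hlt heD' hcardSe
  have hstar_le : hstar ≤ 0 := by
    have := hmin1 _ (mem_DSf_top2 hx)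
    rwa [hgt_top2 hx] at this
  have he2 : e = 2*n+2 := by
    rcases (isDownStep_iff hx e).mp heD' with ⟨h, _⟩ | h | h
    · omega
    · exfalso
      rw [h, hgt_top1 hx] at heh
      omega
    · exact h
  intro j hj hf
  have hjD : j ∈ DSf n x := (mem_DSf hx j).mpr ((isDownStep_iff hx j).mpr (Or.inl ⟨hj, hf⟩))
  have h0 : hstar ≤ hgt x j := hmin1 j hjD
  by_contra hcon
  push_neg at hcon
  have hstar0 : hstar = 0 := by
    rw [he2, hgt_top2 hx] at heh
    omega
  have hj0 : hgt x j = hstar := by omega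
  have := hmin2 j hjD hj0
  omega

lemma key_matched (hx : wt x = n+1)
    (hA : ∀ j (h : j < 2*n+1), x ⟨j, h⟩ = false → 1 ≤ hgt x j)
    (hB : ∃ j, ∃ h : j < 2*n+1, x ⟨j, h⟩ = false ∧ hgt x j = 1) :
    ∃ d, d < 2*n+1 ∧ isDownStep x d ∧ (Sf n x d).card = n := by
  obtain ⟨j0, hj0, hf0, hh0⟩ := hB
  have hj0D : j0 ∈ DSf n x := (mem_DSf hx j0).mpr ((isDownStep_iff hx j0).mpr (Or.inl ⟨hj0, hf0⟩))
  have hTne : ((DSf n x).filter fun j => hgt x j = 1).Nonempty :=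
    ⟨j0, Finset.mem_filter.mpr ⟨hj0D, hh0⟩⟩
  obtain ⟨d, hdD, hdh, hmin⟩ :
      ∃ d, d ∈ DSf n x ∧ hgt x d = 1 ∧ ∀ j ∈ DSf n x, hgt x j = 1 → d ≤ j := by
    refine ⟨((DSf n x).filter fun j => hgt x j = 1).min' hTne, ?_, ?_, ?_⟩
    · exact (Finset.mem_filter.mp (Finset.min'_mem _ hTne)).1
    · exact (Finset.mem_filter.mp (Finset.min'_mem _ hTne)).2
    · intro j hj hjh
      exact Finset.min'_le _ _ (Finset.mem_filter.mpr ⟨hj, hjh⟩)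
  have hdle : d ≤ j0 := hmin j0 hj0D hh0
  have hdlt : d < 2*n+1 := lt_of_le_of_lt hdle hj0
  have hSd : Sf n x d = ((DSf n x).erase (2*n+2)).erase d := by
    apply Finset.Subset.antisymm
    · exact Sf_subset_of_pos hx (by rw [hdh])
    · intro j hj
      rw [Finset.mem_erase, Finset.mem_erase] at hj
      obtain ⟨hjd, hj2, hjD⟩ := hj
      simp only [Sf, Finset.mem_filter]
      refine ⟨hjD, ?_⟩
      have hge : 1 ≤ hgt x j := by
        rcases (isDownStep_iff hx j).mp ((mem_DSf hx j).mp hjD) with ⟨h, hf⟩ | h | h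
        · exact hA j h hf
        · rw [h, hgt_top1 hx]
        · omega
      rcases lt_or_eq_of_le hge with hlt | heq
      · exact Or.inl (by rw [hdh]; exact hlt)
      · right
        refine ⟨by rw [hdh, ← heq], ?_⟩
        have := hmin j hjD heq.symm
        omega
  refine ⟨d, hdlt, (mem_DSf hx d).mp hdD, ?_⟩
  rw [hSd, card_erase2 hx hdlt hdD]

lemma key_height_one (hn : 1 ≤ n) (hx : wt x = n+1)
    (hA : ∀ j (h : j < 2*n+1), x ⟨j, h⟩ = false → 1 ≤ hgt x j)
    {d : ℕ} (hd : d < 2*n+1) (hds : isDownStep x d) (hcard : (Sf n x d).card = n) :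
    hgt x d = 1 := by
  obtain ⟨hdd, hf⟩ := downstep_zero hx hd hds
  have hpos : 1 ≤ hgt x d := hA d hdd hf
  by_contra hcon
  have h2 : 2 ≤ hgt x d := by omega
  have hdD : d ∈ DSf n x := (mem_DSf hx d).mpr hds
  have hsub : Sf n x d ⊆ (((DSf n x).erase (2*n+2)).erase (2*n+1)).erase d := by
    intro j hj
    simp only [Sf, Finset.mem_filter] at hj
    obtain ⟨hjD, hc⟩ := hj
    rw [Finset.mem_erase, Finset.mem_erase, Finset.mem_erase]
    refine ⟨?_, ?_, ?_, hjD⟩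
    · rintro rfl
      rcases hc with hc | ⟨_, hc⟩
      · exact lt_irrefl _ hc
      · exact lt_irrefl _ hc
    · rintro rfl
      rw [hgt_top1 hx] at hc
      rcases hc with hc | ⟨hc, _⟩ <;> omega
    · rintro rfl
      rw [hgt_top2 hx] at hc
      rcases hc with hc | ⟨hc, _⟩ <;> omega
  have hle := Finset.card_le_card hsub
  have hm1 : 2*n+1 ∈ (DSf n x).erase (2*n+2) :=
    Finset.mem_erase.mpr ⟨by omega, mem_DSf_top1 hx⟩
  have hm2 : d ∈ ((DSf n x).erase (2*n+2)).erase (2*n+1) :=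
    Finset.mem_erase.mpr ⟨by omega, Finset.mem_erase.mpr ⟨by omega, hdD⟩⟩
  have hc3 : ((((DSf n x).erase (2*n+2)).erase (2*n+1)).erase d).card = n - 1 := by
    rw [Finset.card_erase_of_mem hm2, Finset.card_erase_of_mem hm1,
      Finset.card_erase_of_mem (mem_DSf_top2 hx), DSf_card hx]
    omega
  omega

end key
section arith

open Classical

variable {n : ℕ} {x : Fin (2*n+1) → Bool}

lemma natA_of_A (hx : wt x = n+1)
    (hA : ∀ j (h : j < 2*n+1), x ⟨j, h⟩ = false → 1 ≤ hgt x j) :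
    ∀ j ≤ 2*n+1, j ≤ 2 * onesUpTo x j := by
  intro j hj
  induction j with
  | zero => omega
  | succ j ih =>
    have hj' : j < 2*n+1 := by omega
    have hih := ih (by omega)
    rw [onesUpTo_succ x j hj']
    by_cases hb : x ⟨j, hj'⟩ = true
    · rw [if_pos hb]; omega
    · have hb' : x ⟨j, hj'⟩ = false := by
        cases hxx : x ⟨j, hj'⟩
        · rfl
        · exact absurd hxx hb
      have hh := hA j hj' hb'
      unfold hgt at hh
      rw [if_neg hb]
      omega

lemma A_of_natA (hx : wt x = n+1)
    (hA : ∀ j ≤ 2*n+1, j ≤ 2 * onesUpTo x j) :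
    ∀ j (h : j < 2*n+1), x ⟨j, h⟩ = false → 1 ≤ hgt x j := by
  intro j h hf
  have h1 := hA (j+1) (by omega)
  rw [onesUpTo_succ x j h, if_neg (by simp [hf])] at h1
  unfold hgt
  omega

lemma natB_of_B (hx : wt x = n+1)
    (hB : ∃ j, ∃ h : j < 2*n+1, x ⟨j, h⟩ = false ∧ hgt x j = 1) :
    ∃ j, 1 ≤ j ∧ j ≤ 2*n ∧ j = 2 * onesUpTo x j := by
  obtain ⟨j, h, hf, hh⟩ := hB
  unfold hgt at hh
  have hsucc : onesUpTo x (j+1) = onesUpTo x j := by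
    rw [onesUpTo_succ x j h, if_neg (by simp [hf]), add_zero]
  have htop : onesUpTo x (2*n+1) = n+1 := onesUpTo_top hx (le_refl _)
  refine ⟨j+1, by omega, ?_, by omega⟩
  by_contra hcon
  have hje : j + 1 = 2*n+1 := by omega
  rw [hje] at hsucc
  omega

lemma B_of_natB (hx : wt x = n+1)
    (hA : ∀ j ≤ 2*n+1, j ≤ 2 * onesUpTo x j)
    (hB : ∃ j, 1 ≤ j ∧ j ≤ 2*n ∧ j = 2 * onesUpTo x j) :
    ∃ j, ∃ h : j < 2*n+1, x ⟨j, h⟩ = false ∧ hgt x j = 1 := by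
  obtain ⟨j, h1, h2, h3⟩ := hB
  obtain ⟨j', rfl⟩ : ∃ j', j = j' + 1 := ⟨j - 1, by omega⟩
  have hj' : j' < 2*n+1 := by omega
  have hA' := hA j' (by omega)
  have hsucc := onesUpTo_succ x j' hj'
  by_cases hb : x ⟨j', hj'⟩ = true
  · rw [if_pos hb] at hsucc
    omega
  · have hb' : x ⟨j', hj'⟩ = false := by
      cases hxx : x ⟨j', hj'⟩
      · rfl
      · exact absurd hxx hb
    rw [if_neg hb] at hsucc
    refine ⟨j', hj', hb', ?_⟩
    unfold hgt
    omega

lemma onesUpTo_init {m : ℕ} (x : Fin (m+1) → Bool) {j : ℕ} (hj : j ≤ m) :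
    onesUpTo (Fin.init x) j = onesUpTo x j := by
  unfold onesUpTo
  apply Finset.card_bij (fun (i : Fin m) _ => Fin.castSucc i)
  · intro a ha
    rw [Finset.mem_filter] at ha ⊢
    refine ⟨Finset.mem_univ _, ha.2.1, ?_⟩
    rw [← ha.2.2]
    rfl
  · intro a _ b _ hab
    exact Fin.castSucc_injective m hab
  · intro b hb
    rw [Finset.mem_filter] at hb
    obtain ⟨-, hb1, hb2⟩ := hb
    have hbm : b.val < m := lt_of_lt_of_le hb1 hj
    refine ⟨⟨b.val, hbm⟩, ?_, ?_⟩
    · rw [Finset.mem_filter]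
      refine ⟨Finset.mem_univ _, hb1, ?_⟩
      show x (Fin.castSucc ⟨b.val, hbm⟩) = true
      have he : Fin.castSucc ⟨b.val, hbm⟩ = b := Fin.ext rfl
      rw [he]
      exact hb2
    · exact Fin.ext rfl

lemma wt_init_aux (x : Fin (2*n+1) → Bool) :
    wt (Fin.init x) = onesUpTo x (2*n) := by
  have h1 : onesUpTo (Fin.init x) (2*n) = wt (Fin.init x) := onesUpTo_of_ge _ (le_refl _)
  rw [← h1, onesUpTo_init x (le_refl _)]

lemma main_core (hn : 1 ≤ n) (hx : wt x = n+1) :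
    ((∃ y, lexUp (2*n+1) (n+1) n x y) ∧ ¬ (∃ y, lexUp (2*n+1) (n+1) (n+1) x y)) ↔
      ((∀ j ≤ 2*n+1, j ≤ 2 * onesUpTo x j) ∧ ∃ j, 1 ≤ j ∧ j ≤ 2*n ∧ j = 2 * onesUpTo x j) := by
  rw [exists_lexUp_iff hx n, exists_lexUp_iff hx (n+1)]
  constructor
  · rintro ⟨⟨d, hd1, hd2, hd3⟩, hQ⟩
    push_neg at hQ
    have hQ' : ∀ d, d < 2*n+1 → isDownStep x d → (Sf n x d).card ≠ n+1 := by
      intro d' hh1 hh2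
      exact hQ d' hh1 hh2
    have hA := key_forward hx hQ'
    have hB : ∃ j, ∃ h : j < 2*n+1, x ⟨j, h⟩ = false ∧ hgt x j = 1 := by
      obtain ⟨hh, hf⟩ := downstep_zero hx hd1 hd2
      exact ⟨d, hh, hf, key_height_one hn hx hA hd1 hd2 hd3⟩
    exact ⟨natA_of_A hx hA, natB_of_B hx hB⟩
  · rintro ⟨hA, hB⟩
    have hA' := A_of_natA hx hA
    have hB' := B_of_natB hx hA hB
    refine ⟨key_matched hx hA' hB', ?_⟩
    rintro ⟨d, h1, h2, h3⟩
    exact unmatched_top hx hA' d h1 h2 h3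

end arith

/-- For the two lexical matchings `M^n_{2n+1,n+1}` and `M^{n+1}_{2n+1,n+1}` between levels
`n+1` and `n+2` of the `(2n+1)`-cube and a vertex `x` of level `n+1`: if the last bit of `x`
is 0, then `x` is matched by the first matching and unmatched by the second iff `x = y∘0`
with `y ∈ D^{=0}_{2n,n+1}`; if the last bit of `x` is 1, then `x` is matched by the first
matching and unmatched by the second iff `x = y∘1` with `y ∈ D^{=0}_{2n,n}`. -/
theorem first_vertices_by_last_bit (n : ℕ) (hn : 1 ≤ n)
    (x : Fin (2 * n + 1) → Bool) (hx : wt x = n + 1) :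
    (x (Fin.last (2 * n)) = false →
      (((∃ y, lexUp (2 * n + 1) (n + 1) n x y) ∧
          ¬ (∃ y, lexUp (2 * n + 1) (n + 1) (n + 1) x y)) ↔
        inDeq0 (2 * n) (n + 1) (Fin.init x))) ∧
    (x (Fin.last (2 * n)) = true →
      (((∃ y, lexUp (2 * n + 1) (n + 1) n x y) ∧
          ¬ (∃ y, lexUp (2 * n + 1) (n + 1) (n + 1) x y)) ↔
        inDeq0 (2 * n) n (Fin.init x))) := by
  have hcore := main_core hn hx
  have htop : onesUpTo x (2*n+1) = n+1 := onesUpTo_top hx (le_refl _)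
  have hstep := onesUpTo_succ x (2*n) (Nat.lt_succ_self (2*n))
  have hfin : (⟨2*n, Nat.lt_succ_self (2*n)⟩ : Fin (2*n+1)) = Fin.last (2*n) := rfl
  rw [hfin] at hstep
  constructor
  · intro hlast
    rw [hcore]
    rw [hlast] at hstep
    simp only [Bool.false_eq_true, if_false, add_zero] at hstep
    have hwt : onesUpTo x (2*n) = n + 1 := by omega
    simp only [inDeq0, inD]
    constructor
    · rintro ⟨hA, hB⟩
      refine ⟨⟨?_, ?_⟩, ?_⟩
      · rw [wt_init_aux x, hwt]
      · intro j hj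
        rw [onesUpTo_init x hj]
        exact hA j (by omega)
      · obtain ⟨j, h1, h2, h3⟩ := hB
        exact ⟨j, h1, h2, by rw [onesUpTo_init x h2]; exact h3⟩
    · rintro ⟨⟨hw, hA⟩, j, h1, h2, h3⟩
      constructor
      · intro j' hj'
        by_cases hc : j' ≤ 2*n
        · have := hA j' hc
          rwa [onesUpTo_init x hc] at this
        · have hj'' : j' = 2*n+1 := by omega
          subst hj''
          rw [htop]
          omega
      · exact ⟨j, h1, h2, by rw [← onesUpTo_init x h2]; exact h3⟩
  · intro hlast
    rw [hcore]
    rw [hlast] at hstep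
    simp only [if_true] at hstep
    have hwt : onesUpTo x (2*n) = n := by omega
    simp only [inDeq0, inD]
    constructor
    · rintro ⟨hA, hB⟩
      refine ⟨⟨?_, ?_⟩, ?_⟩
      · rw [wt_init_aux x, hwt]
      · intro j hj
        rw [onesUpTo_init x hj]
        exact hA j (by omega)
      · refine ⟨2*n, by omega, le_refl _, ?_⟩
        rw [onesUpTo_init x (le_refl _), hwt]
    · rintro ⟨⟨hw, hA⟩, -⟩
      constructor
      · intro j' hj'
        by_cases hc : j' ≤ 2*n
        · have := hA j' hc
          rwa [onesUpTo_init x hc] at this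
        · have hj'' : j' = 2*n+1 := by omega
          subst hj''
          rw [htop]
          omega
      · exact ⟨2*n, by omega, le_refl _, by rw [hwt]⟩
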